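/- Let N ≥ 2, let x_1, …, x_N be pairwise distinct unit vectors in ℝ^n, and let f : ℝ → ℝ be convex on the interval (0,4] and nonincreasing on (0,4]. Then Σ_{i≠j} f(‖x_i − x_j‖²) ≥ N(N−1) · f(2N/(N−1)). In particular, since the N-point regular simplex (which exists on S^{n−1} when N ≤ n+1) has all squared distances equal to 2 + 2/(N−1) = 2N/(N−1) and attains this bound, the regular simplex minimizes f-energy among all N-point configurations on S^{n−1} for every decreasing convex potential f, for N ≤ n+1. -/

import Mathlib

open Finset RealInnerProductSpace

noncomputable section

/-- Coordinate extension of Euclidean space, as a linear map. -/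
def extendMap (m n : ℕ) (h : m ≤ n) :
    EuclideanSpace ℝ (Fin m) →ₗ[ℝ] EuclideanSpace ℝ (Fin n) where
  toFun x := ∑ i : Fin m, x i • EuclideanSpace.single (Fin.castLE h i) (1:ℝ)
  map_add' x y := by
    simp [PiLp.add_apply, add_smul, Finset.sum_add_distrib]
  map_smul' c x := by
    simp [PiLp.smul_apply, smul_smul, Finset.smul_sum]

lemma extendMap_inner (m n : ℕ) (h : m ≤ n) (x y : EuclideanSpace ℝ (Fin m)) :
    ⟪extendMap m n h x, extendMap m n h y⟫ = ⟪x, y⟫ := by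
  simp only [extendMap, LinearMap.coe_mk, AddHom.coe_mk]
  rw [sum_inner]
  simp only [inner_sum, real_inner_smul_left, real_inner_smul_right,
    EuclideanSpace.inner_single_left, EuclideanSpace.single_apply, RCLike.conj_to_real,
    one_mul, Fin.castLE_inj, mul_ite, mul_one, mul_zero]
  rw [PiLp.inner_apply]
  simp [Finset.sum_ite_eq, mul_comm]

lemma card_offDiag_cast (N : ℕ) (hN : 2 ≤ N) :
    (((Finset.univ : Finset (Fin N)).offDiag.card : ℝ)) = (N:ℝ) * ((N:ℝ) - 1) := by
  have h1 : (Finset.univ : Finset (Fin N)).offDiag.card = N * N - N := by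
    simp [Finset.offDiag_card]
  have h2 : N ≤ N * N := Nat.le_mul_of_pos_left N (by omega)
  rw [h1, Nat.cast_sub h2]
  push_cast
  ring

theorem simplex_minimizes_convex_energy (n N : ℕ) (hN : 2 ≤ N)
    (f : ℝ → ℝ) (hconv : ConvexOn ℝ (Set.Ioc (0 : ℝ) 4) f)
    (hmono : AntitoneOn f (Set.Ioc (0 : ℝ) 4)) :
    (∀ x : Fin N → EuclideanSpace ℝ (Fin n), (∀ i, ‖x i‖ = 1) →
      Function.Injective x →
      (N : ℝ) * ((N : ℝ) - 1) * f (2 * N / ((N : ℝ) - 1)) ≤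
        ∑ p ∈ Finset.univ.offDiag, f (‖x p.1 - x p.2‖ ^ 2)) ∧
    (N ≤ n + 1 →
      ∃ y : Fin N → EuclideanSpace ℝ (Fin n), (∀ i, ‖y i‖ = 1) ∧
        Function.Injective y ∧
        (∀ i j, i ≠ j → ‖y i - y j‖ ^ 2 = 2 * N / ((N : ℝ) - 1)) ∧
        ∑ p ∈ Finset.univ.offDiag, f (‖y p.1 - y p.2‖ ^ 2) =
          (N : ℝ) * ((N : ℝ) - 1) * f (2 * N / ((N : ℝ) - 1))) := by
  have hN1 : (2:ℝ) ≤ (N:ℝ) := by exact_mod_cast hN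
  have hN1' : (N:ℝ) - 1 ≠ 0 := by nlinarith
  have hN1pos : (0:ℝ) < (N:ℝ) - 1 := by nlinarith
  have hNpos : (0:ℝ) < (N:ℝ) := by nlinarith
  set T : ℝ := 2 * N / ((N:ℝ) - 1) with hTdef
  have hT : T ∈ Set.Ioc (0:ℝ) 4 := by
    constructor
    · positivity
    · rw [div_le_iff₀ hN1pos]; nlinarith
  set Mr : ℝ := (N:ℝ) * ((N:ℝ) - 1) with hMrdef
  have hMr : 0 < Mr := by positivity
  constructor
  · intro x hx hinj
    set s := (Finset.univ : Finset (Fin N)).offDiag with hs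
    have hcards : (s.card : ℝ) = Mr := by
      have h1 : s.card = N * N - N := by simp [hs, Finset.offDiag_card]
      have h2 : N ≤ N * N := Nat.le_mul_of_pos_left N (by omega)
      rw [h1, Nat.cast_sub h2, hMrdef]; push_cast; ring
    have hmem : ∀ p ∈ s, ‖x p.1 - x p.2‖ ^ 2 ∈ Set.Ioc (0:ℝ) 4 := by
      intro p hp
      have hne : p.1 ≠ p.2 := (Finset.mem_offDiag.mp hp).2.2
      have hxne : x p.1 - x p.2 ≠ 0 := sub_ne_zero.mpr (fun h => hne (hinj h))
      constructor
      · exact pow_pos (norm_pos_iff.mpr hxne) 2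
      · have h4 : ‖x p.1 - x p.2‖ ≤ 2 := by
          calc ‖x p.1 - x p.2‖ ≤ ‖x p.1‖ + ‖x p.2‖ := norm_sub_le _ _
          _ = 2 := by rw [hx, hx]; norm_num
        nlinarith [norm_nonneg (x p.1 - x p.2)]
    have hw0 : ∀ p ∈ s, (0:ℝ) ≤ Mr⁻¹ := fun _ _ => by positivity
    have hw1 : ∑ _p ∈ s, Mr⁻¹ = 1 := by
      rw [Finset.sum_const, nsmul_eq_mul, hcards, mul_inv_cancel₀ (ne_of_gt hMr)]
    have jensen := hconv.map_sum_le hw0 hw1 hmem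
    have hcombo_mem := hconv.1.sum_mem hw0 hw1 hmem
    -- bound the average
    have hA : ∑ p ∈ s, ‖x p.1 - x p.2‖ ^ 2 ≤ 2 * (N:ℝ)^2 := by
      have hsub : ∑ p ∈ s, ‖x p.1 - x p.2‖ ^ 2 ≤
          ∑ p ∈ (Finset.univ ×ˢ Finset.univ : Finset (Fin N × Fin N)), ‖x p.1 - x p.2‖ ^ 2 := by
        apply Finset.sum_le_sum_of_subset_of_nonneg (Finset.subset_univ _)
        intro p _ _; positivity
      have hexp : ∑ p ∈ (Finset.univ ×ˢ Finset.univ : Finset (Fin N × Fin N)), ‖x p.1 - x p.2‖ ^ 2 =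
          2 * (N:ℝ)^2 - 2 * ‖∑ i, x i‖^2 := by
        rw [Finset.sum_product]
        have h1 : ∀ i j : Fin N, ‖x i - x j‖ ^ 2 = 2 - 2 * ⟪x i, x j⟫ := by
          intro i j; rw [norm_sub_sq_real, hx, hx]; ring
        simp only [h1]
        have h2 : ∑ i, ∑ j, ⟪x i, x j⟫ = ‖∑ i, x i‖^2 := by
          rw [← real_inner_self_eq_norm_sq, sum_inner]
          exact Finset.sum_congr rfl fun i _ => by rw [inner_sum]
        rw [Finset.sum_congr rfl (fun i _ => Finset.sum_sub_distrib _ _),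
            Finset.sum_sub_distrib]
        simp only [Finset.sum_const, Finset.card_univ, Fintype.card_fin, nsmul_eq_mul,
          ← Finset.mul_sum]
        rw [h2]; ring
      calc ∑ p ∈ s, ‖x p.1 - x p.2‖ ^ 2 ≤ 2 * (N:ℝ)^2 - 2 * ‖∑ i, x i‖^2 := by
            rw [← hexp]; exact hsub
        _ ≤ 2 * (N:ℝ)^2 := by nlinarith [sq_nonneg ‖∑ i, x i‖]
    have hcombo_le : ∑ p ∈ s, Mr⁻¹ • ‖x p.1 - x p.2‖ ^ 2 ≤ T := by
      simp only [smul_eq_mul, ← Finset.mul_sum]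
      rw [hTdef, hMrdef]
      rw [inv_mul_le_iff₀ (by rw [← hMrdef]; exact hMr)]
      calc ∑ p ∈ s, ‖x p.1 - x p.2‖ ^ 2 ≤ 2 * (N:ℝ)^2 := hA
        _ = (N:ℝ) * ((N:ℝ)-1) * (2 * N / ((N:ℝ) - 1)) := by field_simp
    have hstep := hmono hcombo_mem hT hcombo_le
    have : f T ≤ ∑ p ∈ s, Mr⁻¹ • f (‖x p.1 - x p.2‖ ^ 2) := le_trans hstep jensen
    have h2 : Mr * f T ≤ Mr * ∑ p ∈ s, Mr⁻¹ • f (‖x p.1 - x p.2‖ ^ 2) :=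
      mul_le_mul_of_nonneg_left this (le_of_lt hMr)
    calc Mr * f T ≤ Mr * ∑ p ∈ s, Mr⁻¹ • f (‖x p.1 - x p.2‖ ^ 2) := h2
      _ = ∑ p ∈ s, f (‖x p.1 - x p.2‖ ^ 2) := by
          simp only [smul_eq_mul, ← Finset.mul_sum, ← mul_assoc,
            mul_inv_cancel₀ (ne_of_gt hMr), one_mul]
  · intro hNn
    classical
    set E := EuclideanSpace ℝ (Fin N) with hE
    set u : E := ∑ k : Fin N, EuclideanSpace.single k (1:ℝ) with hu
    have hsu : ∀ i : Fin N, ⟪EuclideanSpace.single i (1:ℝ), u⟫ = 1 := by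
      intro i
      rw [hu, inner_sum]
      simp [EuclideanSpace.inner_single_left, EuclideanSpace.single_apply]
    have hus : ∀ i : Fin N, ⟪u, EuclideanSpace.single i (1:ℝ)⟫ = 1 := by
      intro i; rw [real_inner_comm]; exact hsu i
    have huu : ⟪u, u⟫ = (N:ℝ) := by
      rw [hu, inner_sum]
      have hus' : ∀ i : Fin N, ⟪∑ k : Fin N, EuclideanSpace.single k (1:ℝ), EuclideanSpace.single i (1:ℝ)⟫ = 1 := fun i => hus i
      simp [hus']
    have hss : ∀ i j : Fin N, ⟪EuclideanSpace.single i (1:ℝ), EuclideanSpace.single j (1:ℝ)⟫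
        = if i = j then (1:ℝ) else 0 := by
      intro i j
      simp [EuclideanSpace.inner_single_left, EuclideanSpace.single_apply, eq_comm]
    set w : Fin N → E := fun i => EuclideanSpace.single i (1:ℝ) - ((N:ℝ)⁻¹) • u with hw
    have hww : ∀ i j, ⟪w i, w j⟫ = (if i = j then (1:ℝ) else 0) - 1 / N := by
      intro i j
      rw [hw]
      simp only [inner_sub_left, inner_sub_right, real_inner_smul_left, real_inner_smul_right,
        hss, hsu, hus, huu]
      field_simp
      ring
    have huw : ∀ i, ⟪u, w i⟫ = 0 := by
      intro i
      rw [hw]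
      simp only [inner_sub_right, real_inner_smul_right, hus, huu]
      field_simp
      ring
    have hu0 : u ≠ 0 := by
      intro h
      rw [h, inner_zero_left] at huu
      exact (ne_of_gt hNpos) huu.symm
    set W : Submodule ℝ E := (ℝ ∙ u)ᗮ with hW
    have hwW : ∀ i, w i ∈ W := by
      intro i
      rw [hW, Submodule.mem_orthogonal_singleton_iff_inner_right]
      exact huw i
    have hdim : Module.finrank ℝ W = N - 1 := by
      have h1 : Module.finrank ℝ (ℝ ∙ u) = 1 := finrank_span_singleton hu0
      have h2 := Submodule.finrank_add_finrank_orthogonal (𝕜 := ℝ) (E := E) (ℝ ∙ u)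
      rw [← hW] at h2
      have h3 : Module.finrank ℝ E = N := finrank_euclideanSpace_fin
      omega
    have hdn : Module.finrank ℝ W ≤ n := le_trans hdim.le (by omega)
    set b := stdOrthonormalBasis ℝ W with hb
    set J := (extendMap (Module.finrank ℝ W) n hdn).isometryOfInner
      (extendMap_inner (Module.finrank ℝ W) n hdn) with hJ
    set Φ : W →ₗᵢ[ℝ] EuclideanSpace ℝ (Fin n) := J.comp b.repr.toLinearIsometry with hPhi
    set c : ℝ := Real.sqrt ((N:ℝ) / ((N:ℝ) - 1)) with hc
    have hc2 : c ^ 2 = (N:ℝ) / ((N:ℝ) - 1) := Real.sq_sqrt (by positivity)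
    set y : Fin N → EuclideanSpace ℝ (Fin n) := fun i => Φ (c • ⟨w i, hwW i⟩) with hy
    have hyy : ∀ i j, ⟪y i, y j⟫ = c ^ 2 * ((if i = j then (1:ℝ) else 0) - 1 / N) := by
      intro i j
      rw [hy]
      rw [Φ.inner_map_map]
      rw [real_inner_smul_left, real_inner_smul_right]
      have : ⟪(⟨w i, hwW i⟩ : W), (⟨w j, hwW j⟩ : W)⟫ = ⟪w i, w j⟫ := rfl
      rw [this, hww]
      ring
    have hyy_diag : ∀ i, ⟪y i, y i⟫ = 1 := by
      intro i
      rw [hyy, if_pos rfl, hc2]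
      field_simp
    have hyy_off : ∀ i j, i ≠ j → ⟪y i, y j⟫ = -(1 / ((N:ℝ) - 1)) := by
      intro i j hij
      rw [hyy, if_neg hij, hc2]
      field_simp
      ring
    have hynorm : ∀ i, ‖y i‖ = 1 := by
      intro i
      have h1 : ‖y i‖ ^ 2 = 1 := by rw [← real_inner_self_eq_norm_sq]; exact hyy_diag i
      calc ‖y i‖ = Real.sqrt (‖y i‖ ^ 2) := (Real.sqrt_sq (norm_nonneg _)).symm
        _ = 1 := by rw [h1, Real.sqrt_one]
    have hdist : ∀ i j, i ≠ j → ‖y i - y j‖ ^ 2 = T := by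
      intro i j hij
      rw [norm_sub_sq_real, hynorm, hynorm, hyy_off i j hij, hTdef]
      field_simp
      ring
    have hyinj : Function.Injective y := by
      intro i j h
      by_contra hij
      have h1 := hdist i j hij
      rw [h, sub_self] at h1
      simp only [norm_zero] at h1
      have : (0:ℝ) < T := hT.1
      rw [← h1] at this
      norm_num at this
    refine ⟨y, hynorm, hyinj, hdist, ?_⟩
    have hsum : ∑ p ∈ (Finset.univ : Finset (Fin N)).offDiag, f (‖y p.1 - y p.2‖ ^ 2)
        = ∑ _p ∈ (Finset.univ : Finset (Fin N)).offDiag, f T := by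
      apply Finset.sum_congr rfl
      intro p hp
      rw [hdist p.1 p.2 (Finset.mem_offDiag.mp hp).2.2]
    rw [hsum, Finset.sum_const, nsmul_eq_mul]
    rw [card_offDiag_cast N hN]
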